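/- Let K be a spherically complete valued field (every chain of balls has nonempty intersection). Then every finite-dimensional valued K-vector space (V, v) admits a separating basis. -/

import Mathlib

private lemma range_snoc' {α : Type*} {n : ℕ} (g : Fin n → α) (a : α) :
    Set.range (Fin.snoc g a : Fin (n + 1) → α) = insert a (Set.range g) := by
  ext u
  constructor
  · rintro ⟨i, rfl⟩
    refine Fin.lastCases ?_ ?_ i
    · simp
    · intro j
      right
      exact ⟨j, by simp⟩
  · rintro (rfl | ⟨i, rfl⟩)
    · exact ⟨Fin.last n, by simp⟩
    · exact ⟨i.castSucc, by simp⟩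

private lemma sup_univ_castSucc' {X : Type*} [SemilatticeSup X] [OrderBot X] {n : ℕ}
    (g : Fin (n + 1) → X) :
    Finset.univ.sup g = (Finset.univ.sup fun i : Fin n => g i.castSucc) ⊔ g (Fin.last n) := by
  apply le_antisymm
  · apply Finset.sup_le
    intro i _
    refine Fin.lastCases ?_ ?_ i
    · exact le_sup_right
    · intro j
      exact le_sup_of_le_left (Finset.le_sup (f := fun i : Fin n => g i.castSucc) (Finset.mem_univ j))
  · refine sup_le ?_ (Finset.le_sup (Finset.mem_univ _))
    exact Finset.sup_le fun j _ => Finset.le_sup (Finset.mem_univ _)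

/-- Spherical completeness for closed balls implies that any chain of "generalized balls"
(downward-closed sets around a center) has a common point. -/
private lemma ball_chain_lemma {K Γ₀ : Type*} [Field K] [LinearOrderedCommGroupWithZero Γ₀]
    (v : Valuation K Γ₀)
    (hsc : ∀ S : Set (K × Γ₀), S.Nonempty →
      (∀ p ∈ S, ∀ q ∈ S,
        {x : K | v (x - p.1) ≤ p.2} ⊆ {x : K | v (x - q.1) ≤ q.2} ∨
        {x : K | v (x - q.1) ≤ q.2} ⊆ {x : K | v (x - p.1) ≤ p.2}) →
      ∃ x : K, ∀ p ∈ S, v (x - p.1) ≤ p.2)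
    {I : Type*} [Nonempty I] (B : I → Set K) (ctr : I → K)
    (hctr : ∀ ι, ctr ι ∈ B ι)
    (hball : ∀ ι, ∀ t ∈ B ι, ∀ t', v (t' - ctr ι) ≤ v (t - ctr ι) → t' ∈ B ι)
    (hchain : ∀ ι κ, B ι ⊆ B κ ∨ B κ ⊆ B ι) :
    ∃ x : K, ∀ ι, x ∈ B ι := by
  by_cases hmin : ∃ μ, ∀ ι, B μ ⊆ B ι
  · obtain ⟨μ, hμ⟩ := hmin
    exact ⟨ctr μ, fun ι => hμ ι (hctr μ)⟩
  push_neg at hmin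
  have hstep : ∀ ι, ∃ κ z, B κ ⊆ B ι ∧ z ∈ B ι ∧ z ∉ B κ := by
    intro ι
    obtain ⟨κ, hκ⟩ := hmin ι
    have hsub : B κ ⊆ B ι := (hchain ι κ).resolve_left hκ
    obtain ⟨z, hz1, hz2⟩ := Set.not_subset.mp hκ
    exact ⟨κ, z, hsub, hz1, hz2⟩
  -- every point of `B κ` is within `v (z - ctr κ)` of `ctr κ` when `z ∉ B κ`
  have fact1 : ∀ {κ : I} {z : K}, z ∉ B κ → ∀ t ∈ B κ, v (t - ctr κ) ≤ v (z - ctr κ) := by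
    intro κ z hz t ht
    by_contra h
    exact hz (hball κ t ht z (le_of_not_ge h))
  -- the closed ball around `ctr κ` of radius `v (z - ctr κ)` is contained in `B ι`
  have fact2 : ∀ {ι κ : I} {z : K}, B κ ⊆ B ι → z ∈ B ι → z ∉ B κ →
      ∀ x : K, v (x - ctr κ) ≤ v (z - ctr κ) → x ∈ B ι := by
    intro ι κ z hsub hz _ x hx
    have h1 : v (x - ctr ι) ≤ max (v (x - ctr κ)) (v (ctr κ - ctr ι)) := by
      have e : x - ctr ι = (x - ctr κ) + (ctr κ - ctr ι) := by ring
      rw [e]; exact v.map_add _ _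
    have h2 : v (z - ctr κ) ≤ max (v (z - ctr ι)) (v (ctr κ - ctr ι)) := by
      have e : z - ctr κ = (z - ctr ι) + (ctr ι - ctr κ) := by ring
      rw [e]
      refine le_trans (v.map_add _ _) ?_
      rw [v.map_sub_swap (ctr ι) (ctr κ)]
    have h3 : v (x - ctr ι) ≤ max (v (z - ctr ι)) (v (ctr κ - ctr ι)) :=
      le_trans h1 (max_le (le_trans hx h2) (le_max_right _ _))
    rcases le_max_iff.mp h3 with h | h
    · exact hball ι z hz x h
    · exact hball ι (ctr κ) (hsub (hctr κ)) x h
  set S : Set (K × Γ₀) :=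
    {p | ∃ ι κ z, B κ ⊆ B ι ∧ z ∈ B ι ∧ z ∉ B κ ∧ p = (ctr κ, v (z - ctr κ))} with hS
  have hSne : S.Nonempty := by
    obtain ⟨κ, z, h1, h2, h3⟩ := hstep (Classical.arbitrary I)
    exact ⟨(ctr κ, v (z - ctr κ)), Classical.arbitrary I, κ, z, h1, h2, h3, rfl⟩
  have hSchain : ∀ p ∈ S, ∀ q ∈ S,
      {x : K | v (x - p.1) ≤ p.2} ⊆ {x : K | v (x - q.1) ≤ q.2} ∨
      {x : K | v (x - q.1) ≤ q.2} ⊆ {x : K | v (x - p.1) ≤ p.2} := by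
    rintro p ⟨ι, κ, z, hsub, hz, hzκ, rfl⟩ q ⟨ι', κ', z', hsub', hz', hzκ', rfl⟩
    -- find a common point of the two closed balls
    have hy : ∃ y : K, v (y - ctr κ) ≤ v (z - ctr κ) ∧ v (y - ctr κ') ≤ v (z' - ctr κ') := by
      rcases hchain κ κ' with h | h
      · refine ⟨ctr κ, by simp [zero_le'], fact1 hzκ' _ (h (hctr κ))⟩
      · refine ⟨ctr κ', fact1 hzκ _ (h (hctr κ')), by simp [zero_le']⟩
    obtain ⟨y, hy1, hy2⟩ := hy
    have nest : ∀ (c c' : K) (r r' : Γ₀), r ≤ r' → v (y - c) ≤ r → v (y - c') ≤ r' →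
        {x : K | v (x - c) ≤ r} ⊆ {x : K | v (x - c') ≤ r'} := by
      intro c c' r r' hrr' h1 h2 x hx
      have e : x - c' = (x - c) + ((c - y) + (y - c')) := by ring
      have : v (x - c') ≤ max (v (x - c)) (max (v (c - y)) (v (y - c'))) := by
        rw [e]
        exact le_trans (v.map_add _ _) (max_le_max le_rfl (v.map_add _ _))
      refine le_trans this (max_le (le_trans hx hrr') (max_le ?_ h2))
      rw [v.map_sub_swap]
      exact le_trans h1 hrr'
    rcases le_total (v (z - ctr κ)) (v (z' - ctr κ')) with h | h
    · exact Or.inl (nest _ _ _ _ h hy1 hy2)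
    · exact Or.inr (nest _ _ _ _ h hy2 hy1)
  obtain ⟨x, hx⟩ := hsc S hSne hSchain
  refine ⟨x, fun ι => ?_⟩
  obtain ⟨κ, z, hsub, hz, hzκ⟩ := hstep ι
  exact fact2 hsub hz hzκ x (hx (ctr κ, v (z - ctr κ)) ⟨ι, κ, z, hsub, hz, hzκ, rfl⟩)

/-- Let `K` be a spherically complete valued field (every chain of closed balls has
nonempty intersection).  Then every finite-dimensional valued `K`-vector space `(V, w)`
(valuation `w : V → X` into a linearly ordered set `X` with least element `⊥ = ∞` and an
order-respecting action `f` of the value monoid `Γ₀`, multiplicative convention) admits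
a separating basis. -/
theorem separating_basis_of_spherically_complete {K Γ₀ X V : Type*} [Field K]
    [LinearOrderedCommGroupWithZero Γ₀] [LinearOrder X] [OrderBot X]
    [AddCommGroup V] [Module K V] [FiniteDimensional K V]
    (v : Valuation K Γ₀)
    -- spherical completeness: every chain of closed balls has a common point
    (hsc : ∀ S : Set (K × Γ₀), S.Nonempty →
      (∀ p ∈ S, ∀ q ∈ S,
        {x : K | v (x - p.1) ≤ p.2} ⊆ {x : K | v (x - q.1) ≤ q.2} ∨
        {x : K | v (x - q.1) ≤ q.2} ⊆ {x : K | v (x - p.1) ≤ p.2}) →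
      ∃ x : K, ∀ p ∈ S, v (x - p.1) ≤ p.2)
    (f : Γ₀ → X → X)
    (hone : ∀ x : X, f 1 x = x)
    (hact : ∀ (γ δ : Γ₀) (x : X), f (γ * δ) x = f γ (f δ x))
    (hmono : ∀ γ : Γ₀, Monotone (f γ))
    (hmono' : ∀ x : X, Monotone fun γ : Γ₀ => f γ x)
    (hbot : ∀ γ : Γ₀, f γ ⊥ = ⊥)
    (w : V → X)
    (hw0 : w 0 = ⊥) (hw0' : ∀ z : V, w z = ⊥ → z = 0)
    (hwadd : ∀ z z' : V, w (z + z') ≤ max (w z) (w z'))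
    (hwsmul : ∀ (a : K) (z : V), w (a • z) = f (v a) (w z)) :
    ∃ b : Module.Basis (Fin (Module.finrank K V)) K V,
      ∀ a : Fin (Module.finrank K V) → K,
        w (∑ i, a i • b i) = Finset.univ.sup fun i => f (v (a i)) (w (b i)) := by
  classical
  have hwneg : ∀ u : V, w (-u) = w u := fun u => by
    rw [← neg_one_smul K u, hwsmul, v.map_neg, v.map_one, hone]
  have hwsub : ∀ u u' : V, w (u - u') ≤ max (w u) (w u') := fun u u' => by
    rw [sub_eq_add_neg]
    exact le_trans (hwadd u (-u')) (by rw [hwneg])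
  have hf0 : ∀ u : V, f (v (0 : K)) (w u) = ⊥ := fun u => by
    rw [← hwsmul, zero_smul, hw0]
  have main : ∀ (n : ℕ) (y : Fin n → V), ∃ z : Fin n → V,
      Submodule.span K (Set.range z) = Submodule.span K (Set.range y) ∧
      ∀ a : Fin n → K, w (∑ i, a i • z i) = Finset.univ.sup fun i => f (v (a i)) (w (z i)) := by
    intro n
    induction n with
    | zero =>
      intro y
      exact ⟨y, rfl, fun a => by simp [hw0]⟩
    | succ n IH =>
      intro y
      obtain ⟨z, hspan, hsep⟩ := IH (Fin.init y)
      set Y := y (Fin.last n) with hY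
      set g : (Fin n → K) → X := fun c => w (Y - ∑ i, c i • z i) with hg
      have H2 : ∀ c d : Fin n → K, g d ≤ g c → ∀ i, f (v (d i - c i)) (w (z i)) ≤ g c := by
        intro c d hdc i
        have e1 : (∑ j, (c j - d j) • z j) = (Y - ∑ j, d j • z j) - (Y - ∑ j, c j • z j) := by
          rw [Finset.sum_congr rfl fun j _ => sub_smul (c j) (d j) (z j),
            Finset.sum_sub_distrib]
          abel
        have e2 : w (∑ j, (c j - d j) • z j) ≤ g c := by
          rw [e1]
          simp only [hg]
          exact le_trans (hwsub _ _) (max_le hdc le_rfl)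
        have e3 := hsep fun j => c j - d j
        rw [e3] at e2
        have h4 := le_trans (Finset.le_sup (Finset.mem_univ i)) e2
        rwa [v.map_sub_swap (d i) (c i)]
      have H1 : ∀ (c : Fin n → K) (i : Fin n) (t : K),
          f (v (t - c i)) (w (z i)) ≤ g c → g (Function.update c i t) ≤ g c := by
        intro c i t ht
        have e0 : ∀ j, Function.update c i t j • z j
            = Function.update (fun j => c j • z j) i (t • z i) j := by
          intro j
          rcases eq_or_ne j i with rfl | hj
          · simp
          · simp [Function.update_of_ne hj]
        have e1 : (∑ j, Function.update c i t j • z j)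
            = t • z i + ∑ j ∈ Finset.univ.erase i, c j • z j := by
          rw [Finset.sum_congr rfl fun j _ => e0 j,
            Finset.sum_update_of_mem (Finset.mem_univ i),
            Finset.sdiff_singleton_eq_erase]
        have e2 : (∑ j, c j • z j) = c i • z i + ∑ j ∈ Finset.univ.erase i, c j • z j :=
          (Finset.add_sum_erase _ _ (Finset.mem_univ i)).symm
        have e3 : Y - ∑ j, Function.update c i t j • z j
            = (Y - ∑ j, c j • z j) - (t - c i) • z i := by
          rw [e1, e2, sub_smul]
          abel
        simp only [hg] at ht ⊢
        rw [e3]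
        exact le_trans (hwsub _ _) (max_le le_rfl (by rw [hwsmul]; exact ht))
      have hbest : ∃ c₀ : Fin n → K, ∀ c : Fin n → K, g c₀ ≤ g c := by
        have key : ∀ i : Fin n, ∃ x : K, ∀ c : Fin n → K, f (v (x - c i)) (w (z i)) ≤ g c := by
          intro i
          obtain ⟨x, hx⟩ := ball_chain_lemma v hsc
            (fun c : Fin n → K => {t : K | f (v (t - c i)) (w (z i)) ≤ g c})
            (fun c => c i)
            (by
              intro c
              show f (v (c i - c i)) (w (z i)) ≤ g c
              rw [sub_self, hf0]
              exact bot_le)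
            (by
              intro c t ht t' htt'
              exact le_trans (hmono' (w (z i)) htt') ht)
            (by
              intro c d
              rcases le_total (g c) (g d) with h | h
              · left
                intro t ht
                have h1 : g (Function.update c i t) ≤ g d := le_trans (H1 c i t ht) h
                have h2 := H2 d (Function.update c i t) h1 i
                simpa using h2
              · right
                intro t ht
                have h1 : g (Function.update d i t) ≤ g c := le_trans (H1 d i t ht) h
                have h2 := H2 c (Function.update d i t) h1 i
                simpa using h2)
          exact ⟨x, fun c => hx c⟩
        choose x hx using key
        refine ⟨x, fun c => ?_⟩
        have e1 : Y - ∑ j, x j • z j = (Y - ∑ j, c j • z j) + ∑ j, (c j - x j) • z j := by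
          rw [Finset.sum_congr rfl fun j _ => sub_smul (c j) (x j) (z j),
            Finset.sum_sub_distrib]
          abel
        have e2 : w (∑ j, (c j - x j) • z j) ≤ g c := by
          have e3 := hsep fun j => c j - x j
          rw [e3]
          apply Finset.sup_le
          intro j _
          rw [v.map_sub_swap]
          exact hx j c
        simp only [hg]
        rw [e1]
        exact le_trans (hwadd _ _) (max_le le_rfl e2)
      obtain ⟨c₀, hc₀⟩ := hbest
      set y' : V := Y - ∑ i, c₀ i • z i with hy'
      refine ⟨Fin.snoc z y', ?_, ?_⟩
      · rw [range_snoc']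
        have hz_mem : (∑ i, c₀ i • z i) ∈ Submodule.span K (Set.range (Fin.init y)) := by
          rw [← hspan]
          exact Submodule.sum_mem _ fun i _ =>
            Submodule.smul_mem _ _ (Submodule.subset_span ⟨i, rfl⟩)
        have hrangey : Set.range y = insert Y (Set.range (Fin.init y)) := by
          conv_lhs => rw [← Fin.snoc_init_self y]
          rw [range_snoc']
        rw [hrangey, Submodule.span_insert, Submodule.span_insert, hspan]
        apply le_antisymm
        · refine sup_le ?_ le_sup_right
          rw [Submodule.span_le, Set.singleton_subset_iff]
          exact sub_mem (Submodule.mem_sup_left (Submodule.mem_span_singleton_self Y))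
            (Submodule.mem_sup_right hz_mem)
        · refine sup_le ?_ le_sup_right
          rw [Submodule.span_le, Set.singleton_subset_iff]
          have : Y = y' + ∑ i, c₀ i • z i := by rw [hy']; abel
          rw [this]
          exact add_mem (Submodule.mem_sup_left (Submodule.mem_span_singleton_self y'))
            (Submodule.mem_sup_right hz_mem)
      · intro a
        rw [Fin.sum_univ_castSucc, sup_univ_castSucc']
        simp only [Fin.snoc_castSucc, Fin.snoc_last]
        set A := a (Fin.last n) with hA
        set s := ∑ i : Fin n, a (Fin.castSucc i) • z i with hs
        have hws : w s = Finset.univ.sup fun i => f (v (a (Fin.castSucc i))) (w (z i)) :=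
          hsep fun i => a (Fin.castSucc i)
        rcases eq_or_ne A 0 with hA0 | hA0
        · rw [hA0, zero_smul, add_zero, hf0, hws]
          exact (sup_bot_eq _).symm
        · have hkey : s + A • y' = A • (A⁻¹ • s + y') := by
            rw [smul_add, smul_smul, mul_inv_cancel₀ hA0, one_smul]
          have e1 : w (s + A • y') = f (v A) (w (A⁻¹ • s + y')) := by
            rw [hkey, hwsmul]
          have e3 : w y' ≤ w (A⁻¹ • s + y') := by
            have h5 := hc₀ fun i => c₀ i - A⁻¹ * a (Fin.castSucc i)
            simp only [hg] at h5
            have e2 : A⁻¹ • s + y'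
                = Y - ∑ i, (c₀ i - A⁻¹ * a (Fin.castSucc i)) • z i := by
              rw [hy', hs, Finset.smul_sum]
              rw [Finset.sum_congr rfl fun j _ =>
                sub_smul (c₀ j) (A⁻¹ * a (Fin.castSucc j)) (z j),
                Finset.sum_sub_distrib]
              simp only [smul_smul]
              abel
            rw [e2, hy']
            exact h5
          have term2 : f (v A) (w y') ≤ w (s + A • y') := by
            rw [e1]
            exact hmono (v A) e3
          have hA' : w (A • y') ≤ w (s + A • y') := by
            rw [hwsmul]
            exact term2
          have term1 : w s ≤ w (s + A • y') := by
            calc w s = w (s + A • y' - A • y') := by rw [add_sub_cancel_right]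
              _ ≤ max (w (s + A • y')) (w (A • y')) := hwsub _ _
              _ ≤ w (s + A • y') := max_le le_rfl hA'
          apply le_antisymm
          · refine le_trans (hwadd s (A • y')) (max_le ?_ ?_)
            · rw [hws]
              exact le_sup_left
            · rw [hwsmul]
              exact le_sup_right
          · refine sup_le ?_ term2
            rw [← hws]
            exact term1
  obtain ⟨z, hspan, hsep⟩ := main (Module.finrank K V) (Module.finBasis K V)
  have hspan' : ⊤ ≤ Submodule.span K (Set.range z) := by
    rw [hspan, Module.Basis.span_eq]
  refine ⟨basisOfTopLeSpanOfCardEqFinrank z hspan' (Fintype.card_fin _), fun a => ?_⟩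
  rw [coe_basisOfTopLeSpanOfCardEqFinrank]
  exact hsep a
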